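/- For A ∈ SC(n), the longest element w_n of W_n (the element acting as −id on ℝⁿ) belongs to W_A if and only if A is a positive signed composition of n. -/

import Mathlib

/- Common definitions: the Coxeter group of type Bₙ realized as signed permutations,
   signed compositions, the reflection subgroups `W_A`, double partitions, marks,
   permutation characters, and the action on `ℝⁿ`. -/

attribute [local instance] Classical.propDecidable

namespace GBA

/-- The ambient group of permutations of `ℤ`. -/
abbrev Q : Type := Equiv.Perm ℤ

/-- The generator `t_k`, swapping `k` and `-k`. -/
def tP (k : ℕ) : Q := Equiv.swap (k : ℤ) (-(k : ℤ))

/-- The generator `s_k`, swapping `k ↔ k+1` and `-k ↔ -(k+1)`. -/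
def sP (k : ℕ) : Q := Equiv.swap (k : ℤ) ((k : ℤ) + 1) * Equiv.swap (-(k : ℤ)) (-((k : ℤ) + 1))

/-- The Coxeter group `Wₙ` of type `Bₙ`, realized as the group of permutations `w`
of `{-n, …, -1, 1, …, n}` (fixing everything else) with `w (-i) = - w i` for all `i`. -/
def W (n : ℕ) : Subgroup Q where
  carrier := {w | (∀ i : ℤ, w (-i) = -(w i)) ∧ (∀ i : ℤ, (n : ℤ) < |i| → w i = i)}
  one_mem' := by refine ⟨fun i => ?_, fun i _ => ?_⟩ <;> simp
  mul_mem' := by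
    rintro a b ⟨ha1, ha2⟩ ⟨hb1, hb2⟩
    refine ⟨fun i => ?_, fun i hi => ?_⟩
    · simp only [Equiv.Perm.mul_apply, hb1, ha1]
    · simp only [Equiv.Perm.mul_apply, hb2 i hi, ha2 i hi]
  inv_mem' := by
    rintro a ⟨ha1, ha2⟩
    refine ⟨fun i => a.injective ?_, fun i hi => a.injective ?_⟩
    · rw [show ∀ x, a (a⁻¹ x) = x from fun x => Equiv.apply_symm_apply a x, ha1, show ∀ x, a (a⁻¹ x) = x from fun x => Equiv.apply_symm_apply a x]
    · rw [show ∀ x, a (a⁻¹ x) = x from fun x => Equiv.apply_symm_apply a x, ha2 i hi]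

/-- A signed composition of `n`: a list of nonzero integers whose absolute values sum to `n`. -/
def SC (n : ℕ) : Type := {A : List ℤ // (∀ a ∈ A, a ≠ 0) ∧ (A.map Int.natAbs).sum = n}

/-- The list of Coxeter generators attached to a signed composition (with an offset):
for each part `a` occupying positions `off+1, …, off+|a|`, the generators
`s_p` for `off+1 ≤ p ≤ off+|a|-1`, together with `t_{off+1}` if `a > 0`. -/
def genList : ℕ → List ℤ → List Q
  | _, [] => []
  | off, a :: rest =>
      ((List.range (a.natAbs - 1)).map fun p => sP (off + p + 1))
        ++ (if 0 < a then [tP (off + 1)] else [])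
        ++ genList (off + a.natAbs) rest

/-- The generating set `S_A` of the reflection subgroup `W_A`. -/
def SA {n : ℕ} (A : SC n) : Set Q := {x | x ∈ genList 0 A.1}

/-- The reflection subgroup `W_A` attached to a signed composition `A` of `n`. -/
def WA {n : ℕ} (A : SC n) : Subgroup Q := Subgroup.closure (SA A)

/-- The canonical Coxeter element `c_A` of `(W_A, S_A)`: the product of the
generators in `S_A`, each occurring exactly once. -/
def cox {n : ℕ} (A : SC n) : Q := (genList 0 A.1).prod

/-- `c` is a Coxeter element of `(W_A, S_A)`: a product of all elements of `S_A`,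
each occurring exactly once, in some order. -/
def IsCox {n : ℕ} (A : SC n) (c : Q) : Prop :=
  ∃ L : List Q, L.Perm (genList 0 A.1) ∧ L.prod = c

/-- The generating set `Sₙ = {t, s₁, …, s_{n-1}}` of `Wₙ`. -/
def SFull (n : ℕ) : Set Q := {x | x ∈ genList 0 [(n : ℤ)]}

/-- The length of `w` with respect to a generating set `S` (the minimal length
of an expression of `w` as a product of elements of `S`). -/
noncomputable def lenS (S : Set Q) (w : Q) : ℕ :=
  sInf {k | ∃ L : List Q, (∀ x ∈ L, x ∈ S) ∧ L.length = k ∧ L.prod = w}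

/-- The length function of `(Wₙ, Sₙ)`. -/
noncomputable def len (n : ℕ) : Q → ℕ := lenS (SFull n)

/-- A double partition of `n`: a pair `(λ⁺, λ⁻)` of partitions with `|λ⁺| + |λ⁻| = n`,
encoded by `|λ⁺| = k`. -/
def DP (n : ℕ) : Type := Σ k : Fin (n + 1), Nat.Partition k.1 × Nat.Partition (n - k.1)

noncomputable instance (n : ℕ) : Fintype (DP n) := by unfold DP; infer_instance
noncomputable instance (n : ℕ) : DecidableEq (DP n) := by unfold DP; infer_instance

private lemma filter_sum_aux (L : List ℤ) (hL : ∀ a ∈ L, a ≠ 0) :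
    ((L.filter (fun a => 0 < a)).map Int.natAbs).sum
      + ((L.filter (fun a => a < 0)).map Int.natAbs).sum = (L.map Int.natAbs).sum := by
  induction L with
  | nil => simp
  | cons a L ih =>
    have ha := hL a (by simp)
    have ih' := ih (fun x hx => hL x (by simp [hx]))
    by_cases h : 0 < a
    · simp only [List.filter_cons]
      rw [if_pos (by simpa using h), if_neg (by simpa using (by omega : ¬ a < 0))]
      simp only [List.map_cons, List.sum_cons]
      omega
    · have h' : a < 0 := by omega
      simp only [List.filter_cons]
      rw [if_neg (by simpa using h), if_pos (by simpa using h')]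
      simp only [List.map_cons, List.sum_cons]
      omega

/-- `λ̂ := λ⁺ ⊔ λ⁻`, the signed composition of `n` whose positive parts are the
parts of `λ⁺` and whose negative parts are the negatives of the parts of `λ⁻`. -/
noncomputable def hat {n : ℕ} (l : DP n) : SC n :=
  ⟨l.2.1.parts.toList.map (fun a : ℕ => (a : ℤ)) ++
      l.2.2.parts.toList.map (fun a : ℕ => -(a : ℤ)),
    by
    constructor
    · intro a ha
      rw [List.mem_append] at ha
      rcases ha with h | h <;> obtain ⟨b, hb, rfl⟩ := List.exists_of_mem_map h
      · have := l.2.1.parts_pos (Multiset.mem_toList.1 hb); omega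
      · have := l.2.2.parts_pos (Multiset.mem_toList.1 hb); omega
    · have hk : (l.1 : ℕ) ≤ n := Nat.lt_succ_iff.1 l.1.2
      have h1 := l.2.1.parts_sum
      have h2 := l.2.2.parts_sum
      rw [List.map_append, List.sum_append, List.map_map, List.map_map]
      simp only [Function.comp_def, Int.natAbs_neg, Int.natAbs_natCast]
      simp only [List.map_id']
      rw [Multiset.sum_toList, Multiset.sum_toList, h1, h2]
      omega⟩

/-- `λ(A) ∈ DP(n)`: the double partition obtained by collecting the positive parts
and the (absolute values of the) negative parts of `A`. -/
noncomputable def lamOf {n : ℕ} (A : SC n) : DP n :=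
  ⟨⟨((A.1.filter (fun a => 0 < a)).map Int.natAbs).sum, by
      have := filter_sum_aux A.1 A.2.1
      rw [A.2.2] at this
      omega⟩,
    ⟨(((A.1.filter (fun a => 0 < a)).map Int.natAbs : List ℕ) : Multiset ℕ),
      fun {i} hi => by
        obtain ⟨b, hb, rfl⟩ := List.exists_of_mem_map (by exact_mod_cast hi)
        have := A.2.1 b (List.mem_of_mem_filter hb)
        omega,
      by simp⟩,
    ⟨(((A.1.filter (fun a => a < 0)).map Int.natAbs : List ℕ) : Multiset ℕ),
      fun {i} hi => by
        obtain ⟨b, hb, rfl⟩ := List.exists_of_mem_map (by exact_mod_cast hi)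
        have := A.2.1 b (List.mem_of_mem_filter hb)
        omega,
      by
        have := filter_sum_aux A.1 A.2.1
        rw [A.2.2] at this
        simp only [Multiset.sum_coe]
        omega⟩⟩

/-- The permutation character `Ind_{W_A}^{Wₙ} 1`: its value at `w ∈ Wₙ` is the number
of cosets `x W_A` in `Wₙ/W_A` fixed by `w`, i.e. with `x⁻¹ w x ∈ W_A`. -/
noncomputable def phi (n : ℕ) (A : SC n) (w : Q) : ℚ :=
  Nat.card {q : W n ⧸ (WA A).subgroupOf (W n) //
    ∃ x : W n, (QuotientGroup.mk x : W n ⧸ (WA A).subgroupOf (W n)) = q ∧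
      (x : Q)⁻¹ * w * x ∈ WA A}

/-- The matrix `(φ_λ(c_μ))_{λ,μ ∈ DP(n)}`. -/
noncomputable def phiMat (n : ℕ) : Matrix (DP n) (DP n) ℚ :=
  fun lam mu => phi n (hat lam) (cox (hat mu))

/-- The matrix `(u_{λμ})`, the inverse of `(φ_λ(c_μ))`. -/
noncomputable def uMat (n : ℕ) : Matrix (DP n) (DP n) ℚ := (phiMat n)⁻¹

/-- The conjugacy class `C(λ)` of `Wₙ` containing the Coxeter elements `c_A`
for `λ(A) = λ`, as a subset of the ambient permutation group. -/
def CC (n : ℕ) (lam : DP n) : Set Q :=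
  {w | ∃ g ∈ W n, g * cox (hat lam) * g⁻¹ = w}

/-- The set `D_A` of distinguished (minimal length) coset representatives of `W_A` in `Wₙ`. -/
noncomputable def DA {n : ℕ} (A : SC n) : Set Q :=
  {x | x ∈ W n ∧ ∀ s ∈ SA A, len n x < len n (x * s)}

/-- `D_{AB} = D_A⁻¹ ∩ D_B`. -/
noncomputable def DAB {n : ℕ} (A B : SC n) : Set Q := {x | x⁻¹ ∈ DA A ∧ x ∈ DA B}

/-- The mark `μ_{CA}` of `W_A` on `Wₙ/W_C`: the number of cosets `x W_C` with
`x⁻¹ W_A x ⊆ W_C`. -/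
noncomputable def mark (n : ℕ) (C A : SC n) : ℕ :=
  Nat.card {q : W n ⧸ (WA C).subgroupOf (W n) //
    ∃ x : W n, (QuotientGroup.mk x : W n ⧸ (WA C).subgroupOf (W n)) = q ∧
      ∀ y ∈ WA A, (x : Q)⁻¹ * y * (x : Q) ∈ WA C}

/-- `𝒲(B) = D_{BB}^⊆ = {x ∈ D_{BB} : x⁻¹ W_B x ⊆ W_B}`, a complement of
`W_B` in its normalizer `N_{Wₙ}(W_B)`. -/
noncomputable def Wcal {n : ℕ} (B : SC n) : Set Q :=
  {x | x ∈ DAB B B ∧ ∀ y ∈ WA B, x⁻¹ * y * x ∈ WA B}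

/-- The induction to `Wₙ` of a class function `f` on a subgroup `H ⊆ Wₙ`
(`f` is extended by zero outside `H`):
`(Ind_H^{Wₙ} f)(w) = |H|⁻¹ Σ_{x ∈ Wₙ, x⁻¹wx ∈ H} f(x⁻¹wx)`. -/
noncomputable def ind (n : ℕ) (H : Subgroup Q) (f : Q → ℚ) (w : Q) : ℚ :=
  (∑ᶠ x ∈ (W n : Set Q), if x⁻¹ * w * x ∈ H then f (x⁻¹ * w * x) else 0) / (Nat.card H)

/-- The action of a signed permutation on `ℝⁿ` (coordinates indexed `1, …, n`):
`w` sends `e_i` to `sgn(w(i)) e_{|w(i)|}`, so `(w · v)_j = sgn(w⁻¹(j)) v_{|w⁻¹(j)|}`. -/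
noncomputable def act (n : ℕ) (w : Q) (v : Fin n → ℝ) : Fin n → ℝ := fun j =>
  (if 0 < w⁻¹ ((j : ℕ) + 1 : ℤ) then (1 : ℝ) else -1) *
    (if h : (w⁻¹ ((j : ℕ) + 1 : ℤ)).natAbs - 1 < n then v ⟨(w⁻¹ ((j : ℕ) + 1 : ℤ)).natAbs - 1, h⟩
     else 0)

/-- `Fix(X) = {v ∈ ℝⁿ : x(v) = v for all x ∈ X}`. -/
noncomputable def FixSet (n : ℕ) (X : Set Q) : Set (Fin n → ℝ) :=
  {v | ∀ x ∈ X, act n x v = v}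

/-- The parabolic closure `A(X)`: the pointwise stabilizer in `Wₙ` of `Fix(X)`. -/
noncomputable def pClosure (n : ℕ) (X : Set Q) : Set Q :=
  {w | w ∈ W n ∧ ∀ v ∈ FixSet n X, act n w v = v}

/-- The longest element `wₙ` of `Wₙ`, the signed permutation `i ↦ -i`
(acting as `-id` on `ℝⁿ`). -/
def wLong (n : ℕ) : Q :=
  Function.Involutive.toPerm (fun i => if |i| ≤ (n : ℤ) then -i else i)
    (by intro i; by_cases h : |i| ≤ (n : ℤ) <;> simp [h, abs_neg])

/-- The double partition `((n), ∅)`. -/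
noncomputable def topDP (n : ℕ) : DP n :=
  ⟨⟨n, Nat.lt_succ_self n⟩, Nat.Partition.indiscrete n,
    ⟨0, by simp, by simp⟩⟩

/-- The double partition `(∅, (1ⁿ)) = λ((-1, …, -1))`. -/
noncomputable def botDP (n : ℕ) : DP n :=
  ⟨⟨0, Nat.succ_pos n⟩, ⟨0, by simp, by simp⟩,
    ⟨Multiset.replicate n 1,
      fun {i} hi => by rw [Multiset.eq_of_mem_replicate hi]; norm_num,
      by simp [Multiset.sum_replicate]⟩⟩


/-! ### Auxiliary lemmas for statement 14 -/

/-- Sum of absolute values of a list of integers. -/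
def sumAbs (L : List ℤ) : ℕ := (L.map Int.natAbs).sum

lemma sumAbs_cons (a : ℤ) (L : List ℤ) : sumAbs (a :: L) = a.natAbs + sumAbs L := by
  simp [sumAbs]

lemma sumAbs_append (L1 L2 : List ℤ) : sumAbs (L1 ++ L2) = sumAbs L1 + sumAbs L2 := by
  simp [sumAbs]

lemma tP_apply (k : ℕ) (x : ℤ) :
    tP k x = if x = k then -(k : ℤ) else if x = -(k : ℤ) then k else x := by
  unfold tP; rw [Equiv.swap_apply_def]

lemma sP_apply (q : ℕ) (hq : 1 ≤ q) (x : ℤ) :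
    sP q x = if x = q then (q : ℤ) + 1 else if x = (q : ℤ) + 1 then q
      else if x = -(q : ℤ) then -((q : ℤ) + 1) else if x = -((q : ℤ) + 1) then -(q : ℤ)
      else x := by
  have hq' : (1 : ℤ) ≤ q := by exact_mod_cast hq
  unfold sP
  simp only [Equiv.Perm.mul_apply, Equiv.swap_apply_def]
  split_ifs <;> omega

lemma tP_support (k : ℕ) (x : ℤ) (h : tP k x ≠ x) : x = k ∨ x = -(k : ℤ) := by
  rw [tP_apply] at h
  by_contra hc
  push_neg at hc
  rw [if_neg hc.1, if_neg hc.2] at h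
  exact h rfl

lemma sP_support (q : ℕ) (hq : 1 ≤ q) (x : ℤ) (h : sP q x ≠ x) :
    ((q : ℤ) ≤ x ∧ x ≤ (q : ℤ) + 1) ∨ (-((q : ℤ) + 1) ≤ x ∧ x ≤ -(q : ℤ)) := by
  rw [sP_apply q hq] at h
  by_contra hc
  have hq' : (1 : ℤ) ≤ q := by exact_mod_cast hq
  rw [if_neg (by omega), if_neg (by omega), if_neg (by omega), if_neg (by omega)] at h
  exact h rfl

/-- Support lemma: every generator in `genList off L` moves only points `x`
with `off < |x| ≤ off + sumAbs L`. -/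
lemma genList_support : ∀ (L : List ℤ) (off : ℕ), ∀ g ∈ genList off L, ∀ x : ℤ,
    g x ≠ x → ((off : ℤ) < x ∧ x ≤ (off : ℤ) + sumAbs L) ∨
      (-((off : ℤ) + sumAbs L) ≤ x ∧ x < -(off : ℤ)) := by
  intro L
  induction L with
  | nil => intro off g hg; simp [genList] at hg
  | cons a rest ih =>
    intro off g hg x hx
    rw [sumAbs_cons]
    unfold genList at hg
    rw [List.append_assoc, List.mem_append] at hg
    rcases hg with hg | hg
    · obtain ⟨p, hp, rfl⟩ := List.mem_map.1 hg
      rw [List.mem_range] at hp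
      have := sP_support (off + p + 1) (by omega) x hx
      simp only [Nat.cast_add, Nat.cast_one] at this ⊢
      omega
    · rw [List.mem_append] at hg
      rcases hg with hg | hg
      · have ha : 0 < a := by
          by_contra hne
          rw [if_neg hne] at hg
          simp at hg
        rw [if_pos ha] at hg
        simp only [List.mem_singleton] at hg
        subst hg
        have := tP_support _ _ hx
        simp only [Nat.cast_add, Nat.cast_one] at this ⊢
        omega
      · have := ih (off + a.natAbs) g hg x hx
        simp only [Nat.cast_add, Nat.cast_one] at this ⊢
        omega

lemma fixed_iff_out (g : Q) (lo hi : ℤ) (hlo : 0 ≤ lo) (hhi : 0 ≤ hi)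
    (h : ∀ y : ℤ, g y ≠ y → hi < y ∨ y < -hi) (x : ℤ) :
    (lo < g x ∧ g x ≤ hi) ↔ (lo < x ∧ x ≤ hi) := by
  constructor
  · rintro ⟨h1, h2⟩
    have hfix : g (g x) = g x := by
      by_contra hne
      rcases h _ hne with h' | h' <;> omega
    have hx : g x = x := g.injective hfix
    rw [hx] at h1 h2
    exact ⟨h1, h2⟩
  · rintro ⟨h1, h2⟩
    have hx : g x = x := by
      by_contra hne
      rcases h _ hne with h' | h' <;> omega
    rw [hx]
    exact ⟨h1, h2⟩

lemma fixed_iff_in (g : Q) (lo hi : ℤ)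
    (h : ∀ y : ℤ, g y ≠ y → -lo ≤ y ∧ y ≤ lo) (x : ℤ) :
    (lo < g x ∧ g x ≤ hi) ↔ (lo < x ∧ x ≤ hi) := by
  constructor
  · rintro ⟨h1, h2⟩
    have hfix : g (g x) = g x := by
      by_contra hne
      have hne' : g x ≠ x := fun hc => hne (by rw [hc]; exact hc)
      have := h _ (by
        intro hc
        exact hne' (g.injective hc))
      omega
    have hx : g x = x := g.injective hfix
    rw [hx] at h1 h2
    exact ⟨h1, h2⟩
  · rintro ⟨h1, h2⟩
    have hx : g x = x := by
      by_contra hne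
      have := h _ hne
      omega
    rw [hx]
    exact ⟨h1, h2⟩

/-- Key invariant: if `a < 0` occupies positions `off + sumAbs L1 + 1, …,
off + sumAbs L1 + |a|`, every generator of `W_A` preserves that interval. -/
lemma genList_preserves : ∀ (L1 : List ℤ) (off : ℕ) (a : ℤ) (L2 : List ℤ), a < 0 →
    ∀ g ∈ genList off (L1 ++ a :: L2), ∀ x : ℤ,
      (((off : ℤ) + sumAbs L1) < g x ∧ g x ≤ (off : ℤ) + sumAbs L1 + a.natAbs) ↔
      (((off : ℤ) + sumAbs L1) < x ∧ x ≤ (off : ℤ) + sumAbs L1 + a.natAbs) := by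
  intro L1
  induction L1 with
  | nil =>
    intro off a L2 ha g hg x
    simp only [List.nil_append] at hg
    have h0 : sumAbs ([] : List ℤ) = 0 := rfl
    rw [h0]
    simp only [Nat.cast_zero, add_zero]
    unfold genList at hg
    rw [if_neg (by omega), List.append_nil, List.mem_append] at hg
    rcases hg with hg | hg
    · obtain ⟨p, hp, rfl⟩ := List.mem_map.1 hg
      rw [List.mem_range] at hp
      rw [sP_apply _ (by omega)]
      split_ifs <;> simp only [Nat.cast_add, Nat.cast_one] at * <;> omega
    · refine fixed_iff_out g _ _ (by positivity) (by positivity) (fun y hy => ?_) x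
      have := genList_support L2 (off + a.natAbs) g hg y hy
      simp only [Nat.cast_add] at this
      omega
  | cons b L1' ih =>
    intro off a L2 ha g hg x
    rw [List.cons_append] at hg
    unfold genList at hg
    rw [sumAbs_cons]
    simp only [Nat.cast_add]
    rw [List.append_assoc, List.mem_append] at hg
    rcases hg with hg | hg
    · obtain ⟨p, hp, rfl⟩ := List.mem_map.1 hg
      rw [List.mem_range] at hp
      refine fixed_iff_in _ _ _ (fun y hy => ?_) x
      have := sP_support (off + p + 1) (by omega) y hy
      simp only [Nat.cast_add, Nat.cast_one] at this
      omega
    · rw [List.mem_append] at hg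
      rcases hg with hg | hg
      · have hb : 0 < b := by
          by_contra hne
          rw [if_neg hne] at hg
          simp at hg
        rw [if_pos hb] at hg
        simp only [List.mem_singleton] at hg
        subst hg
        refine fixed_iff_in _ _ _ (fun y hy => ?_) x
        have := tP_support _ _ hy
        simp only [Nat.cast_add, Nat.cast_one] at this
        omega
      · have := ih (off + b.natAbs) a L2 ha g hg x
        simp only [Nat.cast_add] at this
        constructor
        · intro hgx
          exact (this.1 (by omega)).imp (by omega) (by omega)
        · intro hx
          exact (this.2 (by omega)).imp (by omega) (by omega)

lemma sP_mul_sP (q : ℕ) (hq : 1 ≤ q) : sP q * sP q = 1 := by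
  ext x
  simp only [Equiv.Perm.mul_apply, Equiv.Perm.one_apply]
  rw [sP_apply q hq x]
  split_ifs with h1 h2 h3 h4 <;> rw [sP_apply q hq] <;> split_ifs <;> omega

lemma tP_conj (q : ℕ) (hq : 1 ≤ q) : tP (q + 1) = sP q * tP q * sP q := by
  have h1 : sP q (q : ℤ) = (q : ℤ) + 1 := by
    rw [sP_apply q hq]
    split_ifs <;> omega
  have h2 : sP q (-(q : ℤ)) = -((q : ℤ) + 1) := by
    have hq' : (1 : ℤ) ≤ q := by exact_mod_cast hq
    rw [sP_apply q hq]
    split_ifs <;> omega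
  have hinv : (sP q)⁻¹ = sP q := by
    rw [inv_eq_iff_mul_eq_one, sP_mul_sP q hq]
  have : tP (q + 1) = Equiv.swap (sP q (q : ℤ)) (sP q (-(q : ℤ))) := by
    rw [h1, h2]
    unfold tP
    push_cast
    rfl
  rw [this, Equiv.swap_apply_apply, hinv]
  rfl

lemma tP_mem_closure : ∀ (L : List ℤ) (off j : ℕ), (∀ a ∈ L, 0 < a) →
    off < j → j ≤ off + sumAbs L →
    tP j ∈ Subgroup.closure {x : Q | x ∈ genList off L} := by
  intro L
  induction L with
  | nil =>
    intro off j _ h1 h2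
    simp [sumAbs] at h2
    omega
  | cons a rest ih =>
    intro off j hpos h1 h2
    have ha : 0 < a := hpos a (by simp)
    by_cases hcase : j ≤ off + a.natAbs
    · have key : ∀ k : ℕ, off + 1 ≤ k → k ≤ off + a.natAbs →
          tP k ∈ Subgroup.closure {x : Q | x ∈ genList off (a :: rest)} := by
        intro k hk
        induction k, hk using Nat.le_induction with
        | base =>
          intro _
          apply Subgroup.subset_closure
          show tP (off + 1) ∈ genList off (a :: rest)
          unfold genList
          rw [List.append_assoc]
          refine List.mem_append.2 (Or.inr (List.mem_append.2 (Or.inl ?_)))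
          rw [if_pos ha]
          simp
        | succ k hk ihk =>
          intro hle
          have hsmem : sP k ∈ genList off (a :: rest) := by
            have hp : k - off - 1 < a.natAbs - 1 := by omega
            have hm : sP k ∈ (List.range (a.natAbs - 1)).map (fun p => sP (off + p + 1)) :=
              List.mem_map.2 ⟨k - off - 1, List.mem_range.2 hp, by congr 1; omega⟩
            unfold genList
            rw [List.append_assoc]
            exact List.mem_append.2 (Or.inl hm)
          have hsc := Subgroup.subset_closure
            (k := {x : Q | x ∈ genList off (a :: rest)}) hsmem
          have htc := ihk (by omega)
          rw [show k + 1 = k + 1 from rfl, tP_conj k (by omega)]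
          exact mul_mem (mul_mem hsc htc) hsc
      exact key j h1 hcase
    · have hsub : {x : Q | x ∈ genList (off + a.natAbs) rest} ⊆
          {x : Q | x ∈ genList off (a :: rest)} := by
        intro x hx
        show x ∈ genList off (a :: rest)
        unfold genList
        rw [List.append_assoc]
        exact List.mem_append.2 (Or.inr (List.mem_append.2 (Or.inr hx)))
      refine Subgroup.closure_mono hsub (ih (off + a.natAbs) j
        (fun b hb => hpos b (by simp [hb])) (by omega) ?_)
      rw [sumAbs_cons] at h2
      omega

lemma wLong_apply (n : ℕ) (x : ℤ) :
    wLong n x = if -(n : ℤ) ≤ x ∧ x ≤ n then -x else x := by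
  show (if |x| ≤ (n : ℤ) then -x else x) = _
  simp only [abs_le]

lemma wLong_succ (n : ℕ) : wLong (n + 1) = wLong n * tP (n + 1) := by
  ext x
  simp only [Equiv.Perm.mul_apply, tP_apply, wLong_apply]
  split_ifs <;> simp only [Nat.cast_add, Nat.cast_one] at * <;> omega

lemma wLong_zero : wLong 0 = 1 := by
  ext x
  simp only [wLong_apply, Equiv.Perm.one_apply, Nat.cast_zero]
  split_ifs <;> omega

lemma wLong_eq_prod (n : ℕ) : wLong n = ((List.range n).map fun j => tP (j + 1)).prod := by
  induction n with
  | zero => simp [wLong_zero]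
  | succ n ih =>
    rw [List.range_succ, List.map_append, List.prod_append, ← ih, wLong_succ n]
    simp


/-- for `A ∈ SC(n)`, the longest element `wₙ` of `Wₙ` (acting as `-id`
on `ℝⁿ`) belongs to `W_A` if and only if `A` is a positive signed composition. -/
theorem statement_14 (n : ℕ) (A : SC n) :
    wLong n ∈ WA A ↔ ∀ a ∈ A.1, 0 < a := by
  constructor
  · intro hw a ha
    by_contra hpos
    have ha0 : a ≠ 0 := A.2.1 a ha
    have haneg : a < 0 := by omega
    obtain ⟨L1, L2, hA⟩ := List.append_of_mem ha
    set lo : ℤ := (sumAbs L1 : ℤ) with hlodef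
    have hna : 1 ≤ a.natAbs := by omega
    have key : ∀ g ∈ WA A, ∀ x : ℤ,
        (lo < g x ∧ g x ≤ lo + a.natAbs) ↔ (lo < x ∧ x ≤ lo + a.natAbs) := by
      intro g hg
      unfold WA SA at hg
      rw [hA] at hg
      refine Subgroup.closure_induction ?_ ?_ ?_ ?_ hg
      · intro y hy x
        have := genList_preserves L1 0 a L2 haneg y hy x
        simpa using this
      · intro x
        simp
      · intro y z _ _ py pz x
        rw [Equiv.Perm.mul_apply, py (z x)]
        exact pz x
      · intro y _ py x
        have h1 := py (y⁻¹ x)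
        rw [show y (y⁻¹ x) = x from Equiv.apply_symm_apply y x] at h1
        exact h1.symm
    have hn : sumAbs A.1 = n := A.2.2
    rw [hA, sumAbs_append, sumAbs_cons] at hn
    have h1 : lo + 1 ≤ (n : ℤ) := by
      rw [hlodef]
      omega
    have hlo0 : (0 : ℤ) ≤ lo := by positivity
    have hwl : wLong n (lo + 1) = -(lo + 1) := by
      rw [wLong_apply, if_pos ⟨by omega, h1⟩]
    have h2 := (key _ hw (lo + 1)).2 ⟨by omega, by omega⟩
    rw [hwl] at h2
    omega
  · intro hpos
    rw [wLong_eq_prod n]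
    apply Subgroup.list_prod_mem
    intro g hg
    obtain ⟨j, hj, rfl⟩ := List.mem_map.1 hg
    rw [List.mem_range] at hj
    have hn : sumAbs A.1 = n := A.2.2
    have := tP_mem_closure A.1 0 (j + 1) hpos (by omega) (by omega)
    exact this

end GBA
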